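/- Per-step regret inequality at the current iterate. Under the online ADMM–EKF iterations with convex differentiable f_k and proper convex g, with x⋆ = ν⋆, and assuming ‖v‖²_{P_k⁻¹} ≥ α‖v‖² for all v (with α > 0), for every k: f_k(x_k) + g(ν_{k+1}) − (f_k(x⋆) + g(ν⋆)) ≤ (1/(2ρ))(‖w_k‖² − ‖w_{k+1}‖²) − (ρ/2)‖x_{k+1} − ν_k‖² + (ρ/2)(‖ν⋆ − ν_k‖² − ‖ν⋆ − ν_{k+1}‖²) + (1/(2αη))‖∇f_k(x_k)‖² + (η/2)(‖x⋆ − x_k‖²_{P_k⁻¹} − ‖x⋆ − x_{k+1}‖²_{P_k⁻¹}). -/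

import Mathlib

open Finset Matrix
open scoped RealInnerProductSpace

/-- Action of a matrix on a Euclidean vector. -/
noncomputable def act {ι κ : Type*} [Fintype ι] [Fintype κ] (A : Matrix ι κ ℝ)
    (v : EuclideanSpace ℝ κ) : EuclideanSpace ℝ ι :=
  WithLp.toLp 2 (A.mulVec v)

/-- Weighted squared norm `‖v‖²_M = vᵀ M v`. -/
noncomputable def qnorm {ι : Type*} [Fintype ι] (M : Matrix ι ι ℝ)
    (v : EuclideanSpace ℝ ι) : ℝ :=
  ⟪v, act M v⟫

private lemma small_aux {a c : ℝ} (h : ∀ t : ℝ, 0 < t → t ≤ 1 → a ≤ t * c) : a ≤ 0 := by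
  by_contra hr
  push_neg at hr
  rcases le_or_gt c 0 with hc | hc
  · have := h 1 one_pos le_rfl; nlinarith
  · have ht : 0 < min 1 (a / (2 * c)) := lt_min one_pos (by positivity)
    have h1 := h _ ht (min_le_left _ _)
    have h2 : min 1 (a / (2 * c)) * c ≤ (a / (2 * c)) * c :=
      mul_le_mul_of_nonneg_right (min_le_right _ _) hc.le
    have h3 : (a / (2 * c)) * c = a / 2 := by field_simp
    nlinarith

private lemma act_add' {ι κ : Type*} [Fintype ι] [Fintype κ] (M : Matrix ι κ ℝ)
    (u v : EuclideanSpace ℝ κ) : act M (u + v) = act M u + act M v := by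
  ext i
  simp [act, Matrix.mulVec, dotProduct, mul_add, Finset.sum_add_distrib]

private lemma act_smul' {ι κ : Type*} [Fintype ι] [Fintype κ] (M : Matrix ι κ ℝ) (t : ℝ)
    (v : EuclideanSpace ℝ κ) : act M (t • v) = t • act M v := by
  ext i
  simp [act, Matrix.mulVec, dotProduct, Finset.mul_sum, mul_left_comm]

private lemma norm_sq_add_smul {E : Type*} [NormedAddCommGroup E] [InnerProductSpace ℝ E]
    (u d : E) (t : ℝ) :
    ‖u + t • d‖ ^ 2 = ‖u‖ ^ 2 + t * (2 * ⟪u, d⟫) + t ^ 2 * ‖d‖ ^ 2 := by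
  rw [norm_add_sq_real, real_inner_smul_right, norm_smul, mul_pow, Real.norm_eq_abs, sq_abs]
  ring

private lemma qnorm_add_smul {ι : Type*} [Fintype ι] (M : Matrix ι ι ℝ)
    (u d : EuclideanSpace ℝ ι) (t : ℝ) :
    qnorm M (u + t • d)
      = qnorm M u + t * (⟪d, act M u⟫ + ⟪u, act M d⟫) + t ^ 2 * qnorm M d := by
  unfold qnorm
  rw [act_add', act_smul', inner_add_left, inner_add_right, inner_add_right,
    real_inner_smul_left, real_inner_smul_right, real_inner_smul_right, real_inner_smul_left]
  ring

private lemma three_point {E : Type*} [NormedAddCommGroup E] [InnerProductSpace ℝ E]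
    (h Q : E → ℝ) (L K : E → ℝ) (p : E)
    (hconv : ConvexOn ℝ Set.univ h)
    (hexp : ∀ d : E, ∀ t : ℝ, Q (p + t • d) = Q p + t * L d + t ^ 2 * K d)
    (hmin : ∀ z, h p + Q p ≤ h z + Q z) (z : E) :
    h p + Q p + K (z - p) ≤ h z + Q z := by
  have hz : Q z = Q p + L (z - p) + K (z - p) := by
    have := hexp (z - p) 1
    simpa using this
  have key : h p - h z - L (z - p) ≤ 0 := by
    apply small_aux (c := K (z - p))
    intro t ht0 ht1
    have hc := hconv.2 (Set.mem_univ p) (Set.mem_univ z)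
      (by linarith : (0:ℝ) ≤ 1 - t) ht0.le (by ring)
    have hpt : (1 - t) • p + t • z = p + t • (z - p) := by module
    rw [hpt] at hc
    simp only [smul_eq_mul] at hc
    have hm := hmin (p + t • (z - p))
    rw [hexp (z - p) t] at hm
    nlinarith [hm, hc]
  linarith

private lemma grad_ineq {E : Type*} [NormedAddCommGroup E] [InnerProductSpace ℝ E]
    [CompleteSpace E]
    (f : E → ℝ) (hconv : ConvexOn ℝ Set.univ f) (a b : E) (gr : E)
    (hg : HasGradientAt f gr a) : f a + ⟪gr, b - a⟫ ≤ f b := by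
  set d := b - a with hd
  have hline : HasDerivAt (fun t : ℝ => a + t • d) d 0 := by
    simpa using ((hasDerivAt_id (0:ℝ)).smul_const d).const_add a
  have hfd : HasFDerivAt f (InnerProductSpace.toDual ℝ E gr) (a + (0:ℝ) • d) := by
    simpa using hg.hasFDerivAt
  have hφ : HasDerivAt (fun t : ℝ => f (a + t • d)) ⟪gr, d⟫ 0 := by
    have := hfd.comp_hasDerivAt 0 hline
    simpa [InnerProductSpace.toDual_apply_apply, Function.comp_def] using this
  have hslope : Filter.Tendsto (slope (fun t : ℝ => f (a + t • d)) 0)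
      (nhdsWithin 0 (Set.Ioi 0)) (nhds ⟪gr, d⟫) := by
    have := hasDerivAt_iff_tendsto_slope.mp hφ
    exact this.mono_left (nhdsWithin_mono _ (fun t ht => ne_of_gt ht))
  have hub : ∀ᶠ t in nhdsWithin (0:ℝ) (Set.Ioi 0),
      slope (fun t : ℝ => f (a + t • d)) 0 t ≤ f b - f a := by
    filter_upwards [Ioc_mem_nhdsGT_of_mem (Set.mem_Ico.mpr ⟨le_refl 0, one_pos⟩)] with t ht
    obtain ⟨ht0, ht1⟩ := ht
    have hc := hconv.2 (Set.mem_univ a) (Set.mem_univ b)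
      (by linarith : (0:ℝ) ≤ 1 - t) ht0.le (by ring)
    have hpt : (1 - t) • a + t • b = a + t • d := by rw [hd]; module
    rw [hpt] at hc
    simp only [smul_eq_mul] at hc
    rw [slope_def_field]
    have : (f (a + t • d) - f (a + (0:ℝ) • d)) / (t - 0) ≤ f b - f a := by
      rw [div_le_iff₀ (by linarith : (0:ℝ) < t - 0)]
      simp only [zero_smul, add_zero, sub_zero]
      nlinarith [hc]
    simpa [slope, zero_smul, add_zero] using this
  have := le_of_tendsto hslope hub
  linarith

/-- Per-step regret inequality at the current iterate for the online ADMM–EKF iterations. -/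
theorem per_step_regret_current_iterate {n : ℕ}
    -- convex differentiable losses with gradient `f'`
    (f : ℕ → EuclideanSpace ℝ (Fin n) → ℝ)
    (f' : ℕ → EuclideanSpace ℝ (Fin n) → EuclideanSpace ℝ (Fin n))
    (hconv : ∀ k, ConvexOn ℝ Set.univ (f k))
    (hgrad : ∀ k z, HasGradientAt (f k) (f' k z) z)
    -- proper convex regularizer
    (g : EuclideanSpace ℝ (Fin n) → ℝ) (hg : ConvexOn ℝ Set.univ g)
    -- the (inverses of the) covariance matrices
    (Pinv : ℕ → Matrix (Fin n) (Fin n) ℝ) (hP : ∀ k, (Pinv k).PosDef)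
    (ρ η : ℝ) (hρ : 0 < ρ) (hη : 0 < η)
    -- strong-convexity lower bound on the weighted norms
    (α : ℝ) (hα : 0 < α)
    (hA1a : ∀ k, ∀ v : EuclideanSpace ℝ (Fin n), α * ‖v‖ ^ 2 ≤ qnorm (Pinv k) v)
    -- the online ADMM–EKF iterates
    (x ν w : ℕ → EuclideanSpace ℝ (Fin n))
    (hν0 : ν 0 = x 0) (hw0 : w 0 = 0)
    (hxup : ∀ k, ∀ z : EuclideanSpace ℝ (Fin n),
      f k (x (k + 1)) + ⟪w k, x (k + 1) - ν k⟫ + ρ / 2 * ‖x (k + 1) - ν k‖ ^ 2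
          + η / 2 * qnorm (Pinv k) (x (k + 1) - x k)
        ≤ f k z + ⟪w k, z - ν k⟫ + ρ / 2 * ‖z - ν k‖ ^ 2
          + η / 2 * qnorm (Pinv k) (z - x k))
    (hνup : ∀ k, ∀ z : EuclideanSpace ℝ (Fin n),
      g (ν (k + 1)) + ⟪w k, x (k + 1) - ν (k + 1)⟫ + ρ / 2 * ‖x (k + 1) - ν (k + 1)‖ ^ 2
        ≤ g z + ⟪w k, x (k + 1) - z⟫ + ρ / 2 * ‖x (k + 1) - z‖ ^ 2)
    (hwup : ∀ k, w (k + 1) = w k + ρ • (x (k + 1) - ν (k + 1)))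
    -- any feasible point
    (xs νs : EuclideanSpace ℝ (Fin n)) (hfeas : xs = νs) :
    ∀ k : ℕ,
      f k (x k) + g (ν (k + 1)) - (f k xs + g νs)
        ≤ 1 / (2 * ρ) * (‖w k‖ ^ 2 - ‖w (k + 1)‖ ^ 2)
          - ρ / 2 * ‖x (k + 1) - ν k‖ ^ 2
          + ρ / 2 * (‖νs - ν k‖ ^ 2 - ‖νs - ν (k + 1)‖ ^ 2)
          + 1 / (2 * α * η) * ‖f' k (x k)‖ ^ 2
          + η / 2 * (qnorm (Pinv k) (xs - x k) - qnorm (Pinv k) (xs - x (k + 1))) := by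
  subst hfeas
  intro k
  -- three-point inequality for the x-update
  have key1 := three_point (f k)
      (fun z => ⟪w k, z - ν k⟫ + ρ / 2 * ‖z - ν k‖ ^ 2 + η / 2 * qnorm (Pinv k) (z - x k))
      (fun d => ⟪w k, d⟫ + ρ * ⟪x (k + 1) - ν k, d⟫
        + η / 2 * (⟪d, act (Pinv k) (x (k + 1) - x k)⟫ + ⟪x (k + 1) - x k, act (Pinv k) d⟫))
      (fun d => ρ / 2 * ‖d‖ ^ 2 + η / 2 * qnorm (Pinv k) d)
      (x (k + 1)) (hconv k)
      (by
        intro d t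
        have e1 : x (k + 1) + t • d - ν k = (x (k + 1) - ν k) + t • d := by module
        have e2 : x (k + 1) + t • d - x k = (x (k + 1) - x k) + t • d := by module
        simp only [e1, e2, norm_sq_add_smul, qnorm_add_smul, inner_add_right,
          real_inner_smul_right]
        ring)
      (by intro z; have := hxup k z; linarith)
      xs
  -- three-point inequality for the ν-update
  have key2 := three_point g
      (fun z => ⟪w k, x (k + 1) - z⟫ + ρ / 2 * ‖x (k + 1) - z‖ ^ 2)
      (fun d => -⟪w k, d⟫ - ρ * ⟪x (k + 1) - ν (k + 1), d⟫)
      (fun d => ρ / 2 * ‖d‖ ^ 2)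
      (ν (k + 1)) hg
      (by
        intro d t
        have e1 : x (k + 1) - (ν (k + 1) + t • d) = (x (k + 1) - ν (k + 1)) + t • (-d) := by
          module
        simp only [e1, norm_sq_add_smul, inner_add_right, real_inner_smul_right,
          inner_neg_right, norm_neg]
        ring)
      (by intro z; have := hνup k z; linarith)
      xs
  -- gradient inequality
  have keyg := grad_ineq (f k) (hconv k) (x k) (x (k + 1)) (f' k (x k)) (hgrad k (x k))
  have hcs : -⟪f' k (x k), x (k + 1) - x k⟫ ≤ ‖f' k (x k)‖ * ‖x (k + 1) - x k‖ :=
    le_trans (neg_le_abs _) (abs_real_inner_le_norm _ _)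
  have hamgm : ‖f' k (x k)‖ * ‖x (k + 1) - x k‖
      ≤ 1 / (2 * α * η) * ‖f' k (x k)‖ ^ 2 + α * η / 2 * ‖x (k + 1) - x k‖ ^ 2 := by
    have hkey : 1 / (2 * α * η) * ‖f' k (x k)‖ ^ 2 + α * η / 2 * ‖x (k + 1) - x k‖ ^ 2
        - ‖f' k (x k)‖ * ‖x (k + 1) - x k‖
        = (‖f' k (x k)‖ - α * η * ‖x (k + 1) - x k‖) ^ 2 / (2 * α * η) := by
      field_simp
      ring
    have hnn := div_nonneg (sq_nonneg (‖f' k (x k)‖ - α * η * ‖x (k + 1) - x k‖))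
      (by positivity : (0:ℝ) ≤ 2 * α * η)
    linarith
  have hq : η / 2 * (α * ‖x (k + 1) - x k‖ ^ 2) ≤ η / 2 * qnorm (Pinv k) (x (k + 1) - x k) :=
    mul_le_mul_of_nonneg_left (hA1a k _) (by positivity)
  -- dual-variable identity
  have hwsq : ‖w (k + 1)‖ ^ 2
      = ‖w k‖ ^ 2 + 2 * ρ * ⟪w k, x (k + 1) - ν (k + 1)⟫
        + ρ ^ 2 * ‖x (k + 1) - ν (k + 1)‖ ^ 2 := by
    rw [hwup k, norm_add_sq_real, real_inner_smul_right, norm_smul, mul_pow,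
      Real.norm_eq_abs, sq_abs]
    ring
  have hwid : 1 / (2 * ρ) * (‖w k‖ ^ 2 - ‖w (k + 1)‖ ^ 2)
      = -⟪w k, x (k + 1) - ν (k + 1)⟫ - ρ / 2 * ‖x (k + 1) - ν (k + 1)‖ ^ 2 := by
    rw [hwsq]
    field_simp
    ring
  -- linear identities for inner products and norms
  have i1 : ⟪w k, xs - ν k⟫ = ⟪w k, xs - x (k + 1)⟫ + ⟪w k, x (k + 1) - ν k⟫ := by
    rw [← inner_add_right, show (xs - x (k + 1)) + (x (k + 1) - ν k) = xs - ν k from by abel]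
  have i2 : ⟪w k, x (k + 1) - xs⟫ = -⟪w k, xs - x (k + 1)⟫ := by
    rw [show x (k + 1) - xs = -(xs - x (k + 1)) from by abel, inner_neg_right]
  have i3 : ρ / 2 * ‖x (k + 1) - xs‖ ^ 2 = ρ / 2 * ‖xs - x (k + 1)‖ ^ 2 := by
    rw [norm_sub_rev]
  linarith [key1, key2, keyg, hcs, hamgm, hq, hwid, i1, i2, i3]
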